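/- Let T be a complex symmetric n×n matrix whose imaginary part Im T (the real matrix of imaginary parts of the entries of T) is positive definite, let ħ > 0, and let ξ ∈ ℝⁿ. Then the function x ↦ exp(i⟨T x, x⟩/(2ħ)) is Lebesgue integrable on ℝⁿ, T is invertible, and the quantity I(ξ) = (2πħ)^{−n/2} ∫_{ℝⁿ} exp(i⟨x, ξ⟩/ħ) · exp(i⟨T x, x⟩/(2ħ)) dx satisfies I(ξ)² = det(−iT)^{−1} · exp(−i⟨T^{−1} ξ, ξ⟩/ħ). In particular the Fourier transform of the Gaussian exp(i⟨T x, x⟩/(2ħ)) is, up to the normalization (det(−iT))^{−1/2} determined by a branch of the square root, the Gaussian exp(−i⟨T^{−1} ξ, ξ⟩/(2ħ)). -/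

import Mathlib

open Real Matrix MeasureTheory

lemma herm_real {n : ℕ} {M : Matrix (Fin n) (Fin n) ℝ} (h : Mᵀ = M) : M.IsHermitian := by
  rwa [Matrix.IsHermitian, Matrix.conjTranspose_eq_transpose_of_trivial]

lemma star_real {n : ℕ} (M : Matrix (Fin n) (Fin n) ℝ) : star M = Mᵀ := by
  rw [Matrix.star_eq_conjTranspose, Matrix.conjTranspose_eq_transpose_of_trivial]

open scoped MatrixOrder in
lemma simdiag {n : ℕ} {A B : Matrix (Fin n) (Fin n) ℝ} (hA : Aᵀ = A) (hB : B.PosDef) :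
    ∃ (P : Matrix (Fin n) (Fin n) ℝ) (d : Fin n → ℝ),
      P.det ≠ 0 ∧ Pᵀ * B * P = 1 ∧ Pᵀ * A * P = Matrix.diagonal d := by
  obtain ⟨S, hSsym, hSdet, hSS⟩ : ∃ S : Matrix (Fin n) (Fin n) ℝ,
      Sᵀ = S ∧ S.det ≠ 0 ∧ S * S = B := by
    refine ⟨CFC.sqrt B, ?_, ?_, CFC.sqrt_mul_sqrt_self B hB.posSemidef.nonneg⟩
    · rw [← Matrix.conjTranspose_eq_transpose_of_trivial]
      exact (CFC.sqrt_nonneg B).posSemidef.1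
    · have h2 : (CFC.sqrt B).det ^ 2 = B.det := by
        rw [← Matrix.det_pow, CFC.sq_sqrt B hB.posSemidef.nonneg]
      intro h
      rw [h] at h2
      simpa [← h2] using hB.det_pos
  have hSdet' : IsUnit S.det := isUnit_iff_ne_zero.mpr hSdet
  set R := S⁻¹ with hR
  have hRsym : Rᵀ = R := by rw [hR, Matrix.transpose_nonsing_inv, hSsym]
  have hRS : R * S = 1 := Matrix.nonsing_inv_mul S hSdet'
  have hSR : S * R = 1 := Matrix.mul_nonsing_inv S hSdet'
  set M := R * A * R with hM
  have hMsym : M.IsHermitian := by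
    apply herm_real
    rw [hM, Matrix.transpose_mul, Matrix.transpose_mul, hRsym, hA, mul_assoc]
  set U : Matrix (Fin n) (Fin n) ℝ := (hMsym.eigenvectorUnitary : Matrix (Fin n) (Fin n) ℝ) with hU
  have hUU : star U * U = 1 := (Matrix.mem_unitaryGroup_iff').mp hMsym.eigenvectorUnitary.2
  have hUU' : U * star U = 1 := (Matrix.mem_unitaryGroup_iff).mp hMsym.eigenvectorUnitary.2
  have hstar : (R * U)ᵀ = star U * R := by
    rw [Matrix.transpose_mul, hRsym, ← star_real]
  refine ⟨R * U, hMsym.eigenvalues, ?_, ?_, ?_⟩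
  · have key : (R * U).det * ((star U).det * S.det) = 1 := by
      rw [← Matrix.det_mul, ← Matrix.det_mul]
      have : R * U * (star U * S) = 1 := by
        rw [mul_assoc, ← mul_assoc U, hUU', one_mul, hRS]
      rw [this, Matrix.det_one]
    intro h; rw [h, zero_mul] at key; simp at key
  · rw [hstar]
    calc star U * R * B * (R * U) = star U * (R * B * R) * U := by noncomm_ring
      _ = star U * U := by rw [← hSS, show R * (S * S) * R = (R*S) * (S*R) by noncomm_ring,
            hRS, hSR, one_mul, mul_one]
      _ = 1 := hUU
  · rw [hstar]
    have hspec := hMsym.spectral_theorem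
    calc star U * R * A * (R * U) = star U * M * U := by rw [hM]; noncomm_ring
      _ = star U * (U * Matrix.diagonal (RCLike.ofReal ∘ hMsym.eigenvalues) * star U) * U := by
          exact congrArg (fun X => star U * X * U) hspec
      _ = Matrix.diagonal hMsym.eigenvalues := by
          rw [show star U * (U * Matrix.diagonal (RCLike.ofReal ∘ hMsym.eigenvalues) * star U) * U
            = (star U * U) * Matrix.diagonal (RCLike.ofReal ∘ hMsym.eigenvalues) * (star U * U) by
              noncomm_ring, hUU, one_mul, mul_one]
          rfl

lemma cov_meas {n : ℕ} (P : Matrix (Fin n) (Fin n) ℝ) :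
    Measurable (fun y : Fin n → ℝ => P.mulVec y) := by
  have : Continuous (Matrix.toLin' P) := LinearMap.continuous_of_finiteDimensional _
  exact this.measurable

lemma cov_map {n : ℕ} {P : Matrix (Fin n) (Fin n) ℝ} (hP : P.det ≠ 0) :
    Measure.map (fun y : Fin n → ℝ => P.mulVec y) volume
      = ENNReal.ofReal |P.det|⁻¹ • volume := by
  have := Real.map_matrix_volume_pi_eq_smul_volume_pi hP
  rw [show (fun y : Fin n → ℝ => P.mulVec y) = ⇑(Matrix.toLin' P) from rfl]
  simpa [abs_inv] using this

lemma cov_integrable {n : ℕ} {P : Matrix (Fin n) (Fin n) ℝ} (hP : P.det ≠ 0)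
    {f : (Fin n → ℝ) → ℂ} (hf : Continuous f) :
    Integrable f volume ↔ Integrable (fun y => f (P.mulVec y)) volume := by
  rw [show (fun y : Fin n → ℝ => f (P.mulVec y)) = f ∘ (fun y => P.mulVec y) from rfl,
    ← integrable_map_measure (by rw [cov_map hP]; exact hf.aestronglyMeasurable.smul_measure _)
      (cov_meas P).aemeasurable, cov_map hP,
    integrable_smul_measure (by simpa [abs_pos] using hP) ENNReal.ofReal_ne_top]

lemma cov_integral {n : ℕ} {P : Matrix (Fin n) (Fin n) ℝ} (hP : P.det ≠ 0)
    {f : (Fin n → ℝ) → ℂ} (hf : Continuous f) :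
    ∫ x, f x = |P.det| * ∫ y, f (P.mulVec y) := by
  have h1 : ∫ y, f (P.mulVec y)
      = ∫ x, f x ∂(Measure.map (fun y : Fin n → ℝ => P.mulVec y) volume) := by
    rw [integral_map (cov_meas P).aemeasurable]
    · rw [cov_map hP]
      exact hf.aestronglyMeasurable.smul_measure _
  rw [h1, cov_map hP, integral_smul_measure]
  have habs : (0:ℝ) < |P.det| := abs_pos.mpr hP
  rw [ENNReal.toReal_ofReal (by positivity)]
  rw [Complex.real_smul, ← mul_assoc, ← Complex.ofReal_mul, mul_inv_cancel₀ habs.ne']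
  simp

/-- The bilinear pairing `⟨T x, x⟩ = Σ_{j,k} T_{jk} x_k x_j` of a complex matrix
with a real vector. -/
noncomputable def cQuad {n : ℕ} (T : Matrix (Fin n) (Fin n) ℂ) (x : Fin n → ℝ) : ℂ :=
  (T.mulVec fun i => (x i : ℂ)) ⬝ᵥ (fun i => (x i : ℂ))

lemma quad_conj {n : ℕ} (Q Pm : Matrix (Fin n) (Fin n) ℂ) (v : Fin n → ℂ) :
    ((Pmᵀ * Q * Pm).mulVec v) ⬝ᵥ v = (Q.mulVec (Pm.mulVec v)) ⬝ᵥ (Pm.mulVec v) := by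
  rw [← Matrix.mulVec_mulVec, ← Matrix.mulVec_mulVec]
  rw [dotProduct_comm ((Pmᵀ).mulVec _), Matrix.dotProduct_mulVec,
      dotProduct_comm (Q.mulVec (Pm.mulVec v))]
  congr 1
  rw [← Matrix.transpose_transpose Pm, Matrix.vecMul_transpose, Matrix.transpose_transpose]

lemma cast_mulVec {n : ℕ} (P : Matrix (Fin n) (Fin n) ℝ) (y : Fin n → ℝ) :
    (fun i => ((P.mulVec y) i : ℂ)) = (P.map Complex.ofRealHom).mulVec (fun i => (y i : ℂ)) := by
  funext i
  exact RingHom.map_mulVec Complex.ofRealHom P y i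

lemma diag_quad {n : ℕ} (w : Fin n → ℂ) (y : Fin n → ℝ) :
    ((Matrix.diagonal w).mulVec fun i => (y i : ℂ)) ⬝ᵥ (fun i => (y i : ℂ))
      = ∑ j, w j * (y j : ℂ) ^ 2 := by
  simp [dotProduct, Matrix.mulVec_diagonal, sq]
  exact Finset.sum_congr rfl fun j _ => by ring

lemma dot_lin {n : ℕ} (P : Matrix (Fin n) (Fin n) ℝ) (y ξ : Fin n → ℝ) :
    (P.mulVec y) ⬝ᵥ ξ = y ⬝ᵥ (Pᵀ.mulVec ξ) := by
  simp only [dotProduct, Matrix.mulVec, Matrix.transpose_apply, Finset.sum_mul,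
    Finset.mul_sum]
  rw [Finset.sum_comm]
  exact Finset.sum_congr rfl fun i _ => Finset.sum_congr rfl fun j _ => by ring

/-- Gaussian Fourier transform: for a complex symmetric `T` with positive
definite imaginary part, `x ↦ exp(i⟨Tx,x⟩/(2hb))` is integrable, `T` is
invertible, and the normalized Fourier transform
`I(ξ) = (2π hb)^{−n/2} ∫ exp(i⟨x,ξ⟩/hb) exp(i⟨Tx,x⟩/(2hb)) dx` satisfies
`I(ξ)² = det(−iT)⁻¹ · exp(−i⟨T⁻¹ξ,ξ⟩/hb)`. -/
theorem stmt_8 (n : ℕ) (T : Matrix (Fin n) (Fin n) ℂ) (hsymm : Tᵀ = T)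
    (him : (Matrix.of fun i j => (T i j).im).PosDef) (hb : ℝ) (hhb : 0 < hb)
    (ξ : Fin n → ℝ) :
    Integrable (fun x : Fin n → ℝ => Complex.exp (Complex.I * cQuad T x / (2 * hb)))
      volume ∧
    IsUnit T.det ∧
    ((((2 * π * hb) ^ (-(n : ℝ) / 2) : ℝ) : ℂ) *
        ∫ x : Fin n → ℝ,
          Complex.exp (Complex.I * ((x ⬝ᵥ ξ : ℝ) : ℂ) / hb) *
            Complex.exp (Complex.I * cQuad T x / (2 * hb))) ^ 2 =
      ((-Complex.I) • T).det⁻¹ *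
        Complex.exp (-Complex.I * ((T⁻¹.mulVec fun i => ((ξ i : ℂ))) ⬝ᵥ
          (fun i => ((ξ i : ℂ)))) / hb) := by
  -- real and imaginary parts
  have hAsym : (Matrix.of fun i j => (T i j).re)ᵀ = (Matrix.of fun i j => (T i j).re) := by
    ext i j
    simp only [Matrix.transpose_apply, Matrix.of_apply]
    rw [show T j i = Tᵀ i j from rfl, hsymm]
  obtain ⟨P, d, hP, h1, h2⟩ := simdiag hAsym him
  set A : Matrix (Fin n) (Fin n) ℝ := Matrix.of fun i j => (T i j).re with hA
  set B : Matrix (Fin n) (Fin n) ℝ := Matrix.of fun i j => (T i j).im with hB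
  set Pc : Matrix (Fin n) (Fin n) ℂ := P.map Complex.ofRealHom with hPc
  set D : Matrix (Fin n) (Fin n) ℂ := Matrix.diagonal (fun j => (d j : ℂ) + Complex.I) with hD
  have hsplit : T = A.map Complex.ofRealHom + Complex.I • B.map Complex.ofRealHom := by
    ext i j
    simp only [hA, hB, Matrix.add_apply, Matrix.map_apply, Matrix.smul_apply, Matrix.of_apply,
      Complex.ofRealHom_eq_coe, smul_eq_mul]
    rw [mul_comm, Complex.re_add_im]
  have hPcT : Pᵀ.map Complex.ofRealHom = Pcᵀ := by rw [Matrix.transpose_map]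
  have key : Pcᵀ * T * Pc = D := by
    rw [hsplit, Matrix.mul_add, Matrix.add_mul, Matrix.mul_smul, Matrix.smul_mul,
      ← hPcT, ← Matrix.map_mul, ← Matrix.map_mul, ← Matrix.map_mul, ← Matrix.map_mul,
      h1, h2, hD]
    rw [Matrix.map_one _ (map_zero _) (map_one _),
      Matrix.diagonal_map (map_zero _), Matrix.smul_one_eq_diagonal, Matrix.diagonal_add]
    rfl
  have hPcdet : Pc.det = (P.det : ℂ) := (RingHom.map_det Complex.ofRealHom P).symm
  have hPcdet0 : Pc.det ≠ 0 := by rw [hPcdet]; exact_mod_cast hP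
  have hDdet : D.det = ∏ j, ((d j : ℂ) + Complex.I) := by rw [hD, Matrix.det_diagonal]
  have hDj : ∀ j, (d j : ℂ) + Complex.I ≠ 0 := by
    intro j h
    have := congrArg Complex.im h
    simp at this
  have hDdet0 : D.det ≠ 0 := by
    rw [hDdet]; exact Finset.prod_ne_zero_iff.mpr fun j _ => hDj j
  have hdetrel : Pc.det ^ 2 * T.det = D.det := by
    rw [← key, Matrix.det_mul, Matrix.det_mul, Matrix.det_transpose]; ring
  have hTdet0 : T.det ≠ 0 := by
    intro h
    rw [h, mul_zero] at hdetrel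
    exact hDdet0 hdetrel.symm
  have hDinv : D * Matrix.diagonal (fun j => ((d j : ℂ) + Complex.I)⁻¹) = 1 := by
    rw [hD, Matrix.diagonal_mul_diagonal]
    rw [show (fun j => ((d j:ℂ) + Complex.I) * ((d j:ℂ) + Complex.I)⁻¹) = fun _ => 1 from
      funext fun j => mul_inv_cancel₀ (hDj j), Matrix.diagonal_one]
  have hPcU : IsUnit Pc.det := isUnit_iff_ne_zero.mpr hPcdet0
  have hPinv : Pc * Pc⁻¹ = 1 := Matrix.mul_nonsing_inv _ hPcU
  have hPinv' : Pc⁻¹ * Pc = 1 := Matrix.nonsing_inv_mul _ hPcU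
  have hPTinv' : Pcᵀ⁻¹ * Pcᵀ = 1 := Matrix.nonsing_inv_mul _ (by rwa [Matrix.det_transpose])
  have hTeq : T = Pcᵀ⁻¹ * D * Pc⁻¹ := by
    rw [← key]
    calc T = (Pcᵀ⁻¹ * Pcᵀ) * T * (Pc * Pc⁻¹) := by rw [hPTinv', hPinv, one_mul, mul_one]
    _ = Pcᵀ⁻¹ * (Pcᵀ * T * Pc) * Pc⁻¹ := by noncomm_ring
  have hTinv : T⁻¹ = Pc * Matrix.diagonal (fun j => ((d j : ℂ) + Complex.I)⁻¹) * Pcᵀ := by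
    apply Matrix.inv_eq_right_inv
    rw [hTeq]
    calc Pcᵀ⁻¹ * D * Pc⁻¹ * (Pc * Matrix.diagonal (fun j => ((d j : ℂ) + Complex.I)⁻¹) * Pcᵀ)
        = Pcᵀ⁻¹ * D * (Pc⁻¹ * Pc) * Matrix.diagonal (fun j => ((d j : ℂ) + Complex.I)⁻¹) * Pcᵀ := by
          noncomm_ring
      _ = Pcᵀ⁻¹ * (D * Matrix.diagonal (fun j => ((d j : ℂ) + Complex.I)⁻¹)) * Pcᵀ := by
          rw [hPinv']; noncomm_ring
      _ = 1 := by rw [hDinv, mul_one, hPTinv']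
  -- quadratic form after substitution
  have hquad : ∀ y : Fin n → ℝ, cQuad T (P.mulVec y)
      = ∑ j, ((d j : ℂ) + Complex.I) * (y j : ℂ) ^ 2 := by
    intro y
    unfold cQuad
    rw [cast_mulVec, ← quad_conj, key, hD, diag_quad]
  -- coefficients
  have hbC : ((hb : ℂ)) ≠ 0 := by exact_mod_cast hhb.ne'
  set η : Fin n → ℝ := Pᵀ.mulVec ξ with hη
  set bc : Fin n → ℂ := fun j => -(Complex.I * ((d j : ℂ) + Complex.I)) / (2 * hb) with hbc
  set cc : Fin n → ℂ := fun j => Complex.I * (η j : ℂ) / hb with hcc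
  have hbre : ∀ j, 0 < (bc j).re := by
    intro j
    have : bc j = Complex.ofReal (1/(2*hb)) + Complex.ofReal (-(d j)/(2*hb)) * Complex.I := by
      rw [hbc]
      push_cast
      field_simp
      ring_nf
      rw [Complex.I_sq]
      ring
    rw [this]
    simp only [Complex.add_re, Complex.ofReal_re, Complex.mul_re, Complex.ofReal_im,
      Complex.I_re, Complex.I_im, mul_zero, mul_one, zero_sub, zero_mul]
    simp
    positivity
  have hbc0 : ∀ j, bc j ≠ 0 := fun j => ne_of_apply_ne Complex.re (by simpa using (hbre j).ne')
  -- integrand rewrite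
  have hig : ∀ y : Fin n → ℝ,
      Complex.exp (Complex.I * (((P.mulVec y) ⬝ᵥ ξ : ℝ) : ℂ) / hb) *
        Complex.exp (Complex.I * cQuad T (P.mulVec y) / (2 * hb))
      = Complex.exp (-∑ j, bc j * (y j : ℂ) ^ 2 + ∑ j, cc j * (y j : ℂ)) := by
    intro y
    rw [hquad, ← Complex.exp_add]
    congr 1
    rw [dot_lin, ← hη, dotProduct]
    push_cast
    simp only [Finset.mul_sum, Finset.sum_div, ← Finset.sum_neg_distrib,
      ← Finset.sum_add_distrib]
    refine Finset.sum_congr rfl fun j _ => ?_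
    rw [hbc, hcc]
    field_simp
    ring
  -- continuity
  have hcont1 : Continuous fun x : Fin n → ℝ =>
      Complex.exp (Complex.I * cQuad T x / (2 * hb)) := by
    unfold cQuad Matrix.mulVec dotProduct
    fun_prop
  have hcont2 : Continuous fun x : Fin n → ℝ =>
      Complex.exp (Complex.I * ((x ⬝ᵥ ξ : ℝ) : ℂ) / hb) *
        Complex.exp (Complex.I * cQuad T x / (2 * hb)) := by
    unfold cQuad Matrix.mulVec dotProduct
    fun_prop
  -- integrability
  have hint : Integrable (fun x : Fin n → ℝ =>
      Complex.exp (Complex.I * cQuad T x / (2 * hb))) volume := by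
    rw [cov_integrable hP hcont1]
    have : (fun y : Fin n → ℝ => Complex.exp (Complex.I * cQuad T (P.mulVec y) / (2 * hb)))
        = fun y : Fin n → ℝ =>
          Complex.exp (-∑ j, bc j * (y j : ℂ) ^ 2 + ∑ j, (0:ℂ) * (y j : ℂ)) := by
      funext y
      rw [hquad]
      congr 1
      rw [Finset.mul_sum, Finset.sum_div, ← Finset.sum_neg_distrib]
      simp only [zero_mul, Finset.sum_const_zero, add_zero]
      refine Finset.sum_congr rfl fun j _ => ?_
      rw [hbc]
      field_simp
    rw [this]
    exact GaussianFourier.integrable_cexp_neg_sum_mul_add hbre 0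
  refine ⟨hint, isUnit_iff_ne_zero.mpr hTdet0, ?_⟩
  -- the integral
  have hI : (∫ x : Fin n → ℝ,
        Complex.exp (Complex.I * ((x ⬝ᵥ ξ : ℝ) : ℂ) / hb) *
          Complex.exp (Complex.I * cQuad T x / (2 * hb)))
      = |P.det| * ∏ j, (↑π / bc j) ^ (1/2 : ℂ) * Complex.exp (cc j ^ 2 / (4 * bc j)) := by
    rw [cov_integral hP hcont2]
    congr 1
    rw [show (fun y : Fin n → ℝ =>
        Complex.exp (Complex.I * (((P.mulVec y) ⬝ᵥ ξ : ℝ) : ℂ) / hb) *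
          Complex.exp (Complex.I * cQuad T (P.mulVec y) / (2 * hb)))
      = fun y : Fin n → ℝ =>
          Complex.exp (-∑ j, bc j * (y j : ℂ) ^ 2 + ∑ j, cc j * (y j : ℂ)) from funext hig]
    exact GaussianFourier.integral_cexp_neg_sum_mul_add hbre cc
  rw [hI]
  -- final algebra
  have hIne : Complex.I ≠ 0 := Complex.I_ne_zero
  have hFne : ∀ j, -(Complex.I * ((d j : ℂ) + Complex.I)) ≠ 0 :=
    fun j => neg_ne_zero.mpr (mul_ne_zero hIne (hDj j))
  have hpine : (π : ℂ) ≠ 0 := by exact_mod_cast Real.pi_ne_zero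
  -- determinant identity
  have hRHSdet : ((-Complex.I) • T).det⁻¹
      = Pc.det ^ 2 * ∏ j, (-(Complex.I * ((d j : ℂ) + Complex.I)))⁻¹ := by
    rw [Matrix.det_smul, Fintype.card_fin]
    have hTdetval : T.det = D.det / Pc.det ^ 2 := by
      field_simp
      linear_combination hdetrel
    rw [hTdetval, hDdet]
    rw [show (∏ j, (-(Complex.I * ((d j : ℂ) + Complex.I)))⁻¹)
        = (∏ j, (-(Complex.I * ((d j : ℂ) + Complex.I))))⁻¹ by
      rw [← Finset.prod_inv_distrib]]
    rw [show (∏ j, (-(Complex.I * ((d j : ℂ) + Complex.I))))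
        = (-Complex.I) ^ n * ∏ j, ((d j : ℂ) + Complex.I) by
      rw [show (fun j => -(Complex.I * ((d j : ℂ) + Complex.I)))
          = fun j => (-Complex.I) * ((d j : ℂ) + Complex.I) from funext fun j => by ring,
        Finset.prod_mul_distrib, Finset.prod_const, Finset.card_univ, Fintype.card_fin]]
    have h1 : (-Complex.I) ^ n ≠ 0 := pow_ne_zero _ (neg_ne_zero.mpr hIne)
    have h2 : (∏ j, ((d j : ℂ) + Complex.I)) ≠ 0 := Finset.prod_ne_zero_iff.mpr fun j _ => hDj j
    field_simp
  -- inverse quadratic form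
  have hRHSexp : (T⁻¹.mulVec fun i => ((ξ i : ℂ))) ⬝ᵥ (fun i => ((ξ i : ℂ)))
      = ∑ j, ((d j : ℂ) + Complex.I)⁻¹ * (η j : ℂ) ^ 2 := by
    rw [hTinv, show Pc * Matrix.diagonal (fun j => ((d j : ℂ) + Complex.I)⁻¹) * Pcᵀ
        = (Pcᵀ)ᵀ * Matrix.diagonal (fun j => ((d j : ℂ) + Complex.I)⁻¹) * Pcᵀ by
      rw [Matrix.transpose_transpose], quad_conj]
    rw [show Pcᵀ.mulVec (fun i => ((ξ i : ℂ))) = fun i => ((η i : ℝ) : ℂ) by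
      rw [hη, cast_mulVec, hPcT]]
    rw [diag_quad]
  -- squares of the factors
  have hfac : ∀ j, ((↑π / bc j) ^ (1/2 : ℂ) * Complex.exp (cc j ^ 2 / (4 * bc j))) ^ 2
      = (↑π / bc j) * Complex.exp (cc j ^ 2 / (2 * bc j)) := by
    intro j
    have hz : (↑π / bc j) ≠ 0 := div_ne_zero hpine (hbc0 j)
    have hb0 := hbc0 j
    rw [mul_pow, sq, sq, ← Complex.exp_add, ← Complex.cpow_add _ _ hz,
      show (1/2 : ℂ) + 1/2 = 1 by norm_num, Complex.cpow_one]
    congr 1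
    rw [← add_div, show cc j ^ 2 + cc j ^ 2 = 2 * cc j ^ 2 by ring,
      show (4:ℂ) * bc j = 2 * (2 * bc j) by ring,
      mul_div_mul_left _ _ (two_ne_zero)]
  have hr2 : ((((2 * π * hb) ^ (-(n : ℝ) / 2) : ℝ)) : ℂ) ^ 2
      = ((((2 * π * hb) ^ n)⁻¹ : ℝ) : ℂ) := by
    rw [← Complex.ofReal_pow]
    congr 1
    rw [sq, ← Real.rpow_add (by positivity), show -(n:ℝ)/2 + -(n:ℝ)/2 = -(n:ℝ) by ring,
      Real.rpow_neg (by positivity), Real.rpow_natCast]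
  have habs2 : ((|P.det| : ℝ) : ℂ) ^ 2 = Pc.det ^ 2 := by
    rw [← Complex.ofReal_pow, sq_abs, Complex.ofReal_pow, ← hPcdet]
  -- expand the square
  rw [mul_pow, mul_pow, ← Finset.prod_pow,
    Finset.prod_congr rfl fun j _ => hfac j, Finset.prod_mul_distrib, ← Complex.exp_sum,
    hr2, habs2, hRHSdet, hRHSexp]
  -- the two remaining identities
  have hE1 : ((((2 * π * hb) ^ n)⁻¹ : ℝ) : ℂ) * ∏ j, (↑π / bc j)
      = ∏ j, (-(Complex.I * ((d j : ℂ) + Complex.I)))⁻¹ := by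
    push_cast
    rw [show ((((2:ℂ) * π * hb) ^ n)⁻¹) = ∏ _j : Fin n, ((2:ℂ) * π * hb)⁻¹ by
      rw [Finset.prod_const, Finset.card_univ, Fintype.card_fin, ← inv_pow],
      ← Finset.prod_mul_distrib]
    refine Finset.prod_congr rfl fun j _ => ?_
    have hX := hFne j
    have h2pih : ((2:ℂ) * π * hb) ≠ 0 :=
      mul_ne_zero (mul_ne_zero two_ne_zero hpine) hbC
    simp only [hbc]
    rw [div_div_eq_mul_div, div_eq_mul_inv (↑π * (2 * (hb:ℂ))), ← mul_assoc,
      show ((2:ℂ) * ↑π * ↑hb)⁻¹ * (↑π * (2 * (hb:ℂ))) = 1 by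
        rw [inv_mul_eq_div, div_eq_one_iff_eq h2pih]; ring,
      one_mul]
  have hE2 : ∑ j, cc j ^ 2 / (2 * bc j)
      = -Complex.I * (∑ j, ((d j : ℂ) + Complex.I)⁻¹ * (η j : ℂ) ^ 2) / hb := by
    rw [neg_mul, neg_div, Finset.mul_sum, Finset.sum_div, ← Finset.sum_neg_distrib]
    refine Finset.sum_congr rfl fun j _ => ?_
    have h2b : (2 : ℂ) * bc j ≠ 0 := mul_ne_zero two_ne_zero (hbc0 j)
    rw [div_eq_iff h2b]
    simp only [hbc, hcc]
    field_simp [hDj j]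
  rw [hE2]
  calc ((((2 * π * hb) ^ n)⁻¹ : ℝ) : ℂ) * (Pc.det ^ 2 *
        ((∏ j, (↑π / bc j)) * Complex.exp
          (-Complex.I * (∑ j, ((d j : ℂ) + Complex.I)⁻¹ * (η j : ℂ) ^ 2) / hb)))
      = (((((2 * π * hb) ^ n)⁻¹ : ℝ) : ℂ) * ∏ j, (↑π / bc j)) * (Pc.det ^ 2 *
          Complex.exp (-Complex.I * (∑ j, ((d j : ℂ) + Complex.I)⁻¹ * (η j : ℂ) ^ 2) / hb)) := by
        ring
    _ = Pc.det ^ 2 * (∏ j, (-(Complex.I * ((d j : ℂ) + Complex.I)))⁻¹) *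
          Complex.exp (-Complex.I * (∑ j, ((d j : ℂ) + Complex.I)⁻¹ * (η j : ℂ) ^ 2) / hb) := by
        rw [hE1]; ring
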